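/- Let μ be the sparse measure on 2^ℕ (marginals m_{n_k}({1}) = 2^k/(2^k+1) along the sparse index sequence n_0 = 0, n_{k+1} = n_k + 2^{k·(Σ_{i≤k} i)}, and m_n({1}) = 1/2 otherwise), set p_k = 2^{Σ_{i≤k} i}, and for k ≥ 1 let Z_k = {x ∈ 2^ℕ : the number of indices i with n_k < i < n_{k+1} and x(i) = 1 is at most p_k}. Then the events (Z_k)_{k≥1} are mutually independent under μ and μ-almost every x belongs to only finitely many of the sets Z_k; i.e., μ(limsup_k Z_k) = 0. -/

import Mathlib

open MeasureTheory Filter Set ENNReal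

/-- `μ` is the product of the marginal measures `m n` on `Bool`. -/
def IsProductMeasure (μ : Measure (ℕ → Bool)) (m : ℕ → Measure Bool) : Prop :=
  ∀ (s : Finset ℕ) (a : ℕ → Bool),
    μ {x | ∀ n ∈ s, x n = a n} = ∏ n ∈ s, m n {a n}

/-- The sparse index sequence: `n₀ = 0` and `n_{k+1} = n_k + 2 ^ (k · Σ_{i ≤ k} i)`. -/
def sparseSeq : ℕ → ℕ
  | 0 => 0
  | k + 1 => sparseSeq k + 2 ^ (k * ∑ i ∈ Finset.range (k + 1), i)

/-- `p_k = 2 ^ (Σ_{i ≤ k} i)`. -/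
def sparseP (k : ℕ) : ℕ := 2 ^ (∑ i ∈ Finset.range (k + 1), i)

/-- The marginals of the sparse measure: `m (n_k) {1} = 2^k/(2^k+1)` along the sparse index
sequence, and `m n {1} = 1/2` for `n` not of the form `n_k`. -/
def IsSparseMarginals (m : ℕ → Measure Bool) : Prop :=
  (∀ k : ℕ, m (sparseSeq k) {true} = (2 ^ k : ℝ≥0∞) / (2 ^ k + 1)) ∧
    ∀ n : ℕ, (∀ k : ℕ, n ≠ sparseSeq k) → m n {true} = 1 / 2

/-- The multiplicative jump `m n {0} / m n {1}` of the sparse measure: `r (n_k) = 2⁻ᵏ` along the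
sparse index sequence and `r n = 1` otherwise. -/
def IsSparseJump (r : ℕ → ℝ≥0∞) : Prop :=
  (∀ k : ℕ, r (sparseSeq k) = ((2 : ℝ≥0∞) ^ k)⁻¹) ∧
    ∀ n : ℕ, (∀ k : ℕ, n ≠ sparseSeq k) → r n = 1

/-- The number of indices `i` with `n_k < i < n_{k+1}` and `x i = 1`. -/
def onesBetween (x : ℕ → Bool) (k : ℕ) : ℕ :=
  ((Finset.Ioo (sparseSeq k) (sparseSeq (k + 1))).filter fun i => x i = true).card

/-- The event `Z_k`: the number of `1`s of `x` strictly between `n_k` and `n_{k+1}` is at most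
`p_k`. -/
def sparseEvent (k : ℕ) : Set (ℕ → Bool) := {x | onesBetween x k ≤ sparseP k}

namespace SparseAux

/-- Cylinder set: coordinates in `s` agree with the indicator of `t`. -/
def cylSet (s t : Finset ℕ) : Set (ℕ → Bool) := {x | ∀ n ∈ s, x n = decide (n ∈ t)}

/-- Event depending on the coordinates in `s` through a boolean predicate on the set of
coordinates equal to `true`. -/
def eventOn (s : Finset ℕ) (P : Finset ℕ → Bool) : Set (ℕ → Bool) :=
  {x | P (s.filter fun n => x n = true) = true}

lemma measurableSet_cylSet (s t : Finset ℕ) : MeasurableSet (cylSet s t) := by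
  have h : cylSet s t = ⋂ n ∈ (s : Set ℕ), (fun x : ℕ → Bool => x n) ⁻¹' {decide (n ∈ t)} := by
    ext x; simp [cylSet]
  rw [h]
  exact MeasurableSet.biInter s.countable_toSet fun n _ =>
    (measurable_pi_apply n) (measurableSet_singleton _)

lemma filter_eq_of_mem_cylSet {s t : Finset ℕ} (hts : t ⊆ s) {x : ℕ → Bool}
    (hx : x ∈ cylSet s t) : (s.filter fun n => x n = true) = t := by
  ext n
  simp only [Finset.mem_filter]
  constructor
  · rintro ⟨hns, hxn⟩
    have := hx n hns
    rw [hxn] at this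
    simpa using this.symm
  · intro hnt
    refine ⟨hts hnt, ?_⟩
    rw [hx n (hts hnt)]
    simp [hnt]

lemma eventOn_eq_biUnion (s : Finset ℕ) (P : Finset ℕ → Bool) :
    eventOn s P = ⋃ t ∈ (s.powerset.filter fun t => P t = true), cylSet s t := by
  ext x
  simp only [eventOn, Set.mem_setOf_eq, Set.mem_iUnion, Finset.mem_filter,
    Finset.mem_powerset, exists_prop]
  constructor
  · intro hP
    refine ⟨s.filter fun n => x n = true, ⟨Finset.filter_subset _ _, hP⟩, ?_⟩
    intro n hns
    by_cases h : x n = true <;> simp [Finset.mem_filter, hns, h]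
  · rintro ⟨t, ⟨hts, hPt⟩, hx⟩
    rwa [filter_eq_of_mem_cylSet hts hx]

lemma measurableSet_eventOn (s : Finset ℕ) (P : Finset ℕ → Bool) :
    MeasurableSet (eventOn s P) := by
  rw [eventOn_eq_biUnion]
  exact (s.powerset.filter fun t => P t = true).measurableSet_biUnion
    fun t _ => measurableSet_cylSet s t

lemma meas_eventOn {μ : Measure (ℕ → Bool)} {m : ℕ → Measure Bool}
    (hμ : IsProductMeasure μ m) (s : Finset ℕ) (P : Finset ℕ → Bool) :
    μ (eventOn s P) =
      ∑ t ∈ s.powerset.filter fun t => P t = true, ∏ n ∈ s, m n {decide (n ∈ t)} := by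
  rw [eventOn_eq_biUnion]
  rw [measure_biUnion_finset ?_ fun t _ => measurableSet_cylSet s t]
  · exact Finset.sum_congr rfl fun t _ => hμ s fun n => decide (n ∈ t)
  · intro t₁ h₁ t₂ h₂ hne
    simp only [Finset.coe_filter, Set.mem_setOf_eq, Finset.mem_powerset] at h₁ h₂
    simp only [Function.onFun]
    rw [Set.disjoint_left]
    intro x hx₁ hx₂
    exact hne (by rw [← filter_eq_of_mem_cylSet h₁.1 hx₁, filter_eq_of_mem_cylSet h₂.1 hx₂])

lemma eventOn_inter (s u : Finset ℕ) (P Q : Finset ℕ → Bool) :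
    eventOn s P ∩ eventOn u Q
      = eventOn (s ∪ u) fun t => P (t ∩ s) && Q (t ∩ u) := by
  ext x
  have hs : ((s ∪ u).filter fun n => x n = true) ∩ s = s.filter fun n => x n = true := by
    ext n; simp only [Finset.mem_inter, Finset.mem_filter, Finset.mem_union]; tauto
  have hu : ((s ∪ u).filter fun n => x n = true) ∩ u = u.filter fun n => x n = true := by
    ext n; simp only [Finset.mem_inter, Finset.mem_filter, Finset.mem_union]; tauto
  simp [eventOn, hs, hu]

lemma sum_prod_mul {m : ℕ → Measure Bool} {s u : Finset ℕ} (hd : Disjoint s u)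
    (P Q : Finset ℕ → Bool) :
    ∑ t ∈ (s ∪ u).powerset.filter fun t => (P (t ∩ s) && Q (t ∩ u)) = true,
        ∏ n ∈ s ∪ u, m n {decide (n ∈ t)}
      = (∑ t ∈ s.powerset.filter fun t => P t = true, ∏ n ∈ s, m n {decide (n ∈ t)}) *
        (∑ t ∈ u.powerset.filter fun t => Q t = true, ∏ n ∈ u, m n {decide (n ∈ t)}) := by
  rw [Finset.sum_mul_sum]
  rw [← Finset.sum_product']
  refine Finset.sum_nbij' (fun t => (t ∩ s, t ∩ u)) (fun p => p.1 ∪ p.2) ?_ ?_ ?_ ?_ ?_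
  · intro t ht
    simp only [Finset.mem_filter, Finset.mem_powerset, Bool.and_eq_true] at ht
    simp only [Finset.mem_product, Finset.mem_filter, Finset.mem_powerset]
    exact ⟨⟨Finset.inter_subset_right, ht.2.1⟩, ⟨Finset.inter_subset_right, ht.2.2⟩⟩
  · intro p hp
    simp only [Finset.mem_product, Finset.mem_filter, Finset.mem_powerset] at hp
    obtain ⟨⟨h1s, h1P⟩, ⟨h2u, h2Q⟩⟩ := hp
    have e1 : (p.1 ∪ p.2) ∩ s = p.1 := by
      ext n
      simp only [Finset.mem_inter, Finset.mem_union]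
      constructor
      · rintro ⟨h | h, hns⟩
        · exact h
        · exact absurd hns (Finset.disjoint_right.1 hd (h2u h))
      · intro h; exact ⟨Or.inl h, h1s h⟩
    have e2 : (p.1 ∪ p.2) ∩ u = p.2 := by
      ext n
      simp only [Finset.mem_inter, Finset.mem_union]
      constructor
      · rintro ⟨h | h, hnu⟩
        · exact absurd hnu (Finset.disjoint_left.1 hd (h1s h))
        · exact h
      · intro h; exact ⟨Or.inr h, h2u h⟩
    simp only [Finset.mem_filter, Finset.mem_powerset, e1, e2, h1P, h2Q, Bool.and_self]
    exact ⟨Finset.union_subset (h1s.trans Finset.subset_union_left)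
      (h2u.trans Finset.subset_union_right), trivial⟩
  · intro t ht
    simp only [Finset.mem_filter, Finset.mem_powerset] at ht
    show t ∩ s ∪ t ∩ u = t
    ext n
    simp only [Finset.mem_union, Finset.mem_inter]
    constructor
    · rintro (⟨h, _⟩ | ⟨h, _⟩) <;> exact h
    · intro h
      rcases Finset.mem_union.1 (ht.1 h) with hs | hu
      · exact Or.inl ⟨h, hs⟩
      · exact Or.inr ⟨h, hu⟩
  · intro p hp
    simp only [Finset.mem_product, Finset.mem_filter, Finset.mem_powerset] at hp
    obtain ⟨⟨h1s, _h1P⟩, ⟨h2u, _h2Q⟩⟩ := hp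
    have e1 : (p.1 ∪ p.2) ∩ s = p.1 := by
      ext n
      simp only [Finset.mem_inter, Finset.mem_union]
      constructor
      · rintro ⟨h | h, hns⟩
        · exact h
        · exact absurd hns (Finset.disjoint_right.1 hd (h2u h))
      · intro h; exact ⟨Or.inl h, h1s h⟩
    have e2 : (p.1 ∪ p.2) ∩ u = p.2 := by
      ext n
      simp only [Finset.mem_inter, Finset.mem_union]
      constructor
      · rintro ⟨h | h, hnu⟩
        · exact absurd hnu (Finset.disjoint_left.1 hd (h1s h))
        · exact h
      · intro h; exact ⟨Or.inr h, h2u h⟩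
    simp [e1, e2]
  · intro t ht
    simp only [Finset.mem_filter, Finset.mem_powerset] at ht
    rw [Finset.prod_union hd]
    congr 1
    · refine Finset.prod_congr rfl fun n hn => ?_
      have : decide (n ∈ t) = decide (n ∈ t ∩ s) := by simp [Finset.mem_inter, hn]
      rw [this]
    · refine Finset.prod_congr rfl fun n hn => ?_
      have : decide (n ∈ t) = decide (n ∈ t ∩ u) := by simp [Finset.mem_inter, hn]
      rw [this]

end SparseAux
namespace SparseAux

lemma isProbabilityMeasure {μ : Measure (ℕ → Bool)} {m : ℕ → Measure Bool}
    (hμ : IsProductMeasure μ m) : IsProbabilityMeasure μ := by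
  constructor
  have h := hμ ∅ fun _ => true
  simpa using h

lemma biInter_eventOn (S : Finset ℕ) (B : ℕ → Finset ℕ) (P : ℕ → Finset ℕ → Bool) :
    (⋂ k ∈ S, eventOn (B k) (P k))
      = eventOn (S.biUnion B) fun t => decide (∀ k ∈ S, P k (t ∩ B k) = true) := by
  classical
  induction S using Finset.induction with
  | empty => simp [eventOn]
  | @insert a S ha ih =>
    rw [Finset.set_biInter_insert, ih, eventOn_inter, Finset.biUnion_insert]
    refine congrArg (eventOn (B a ∪ S.biUnion B)) ?_
    · funext t
      have harg : ∀ k ∈ S, (t ∩ S.biUnion B) ∩ B k = t ∩ B k := by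
        intro k hk
        rw [Finset.inter_assoc, Finset.inter_eq_right.2 (Finset.subset_biUnion_of_mem B hk)]
      have h2 : (∀ k ∈ S, P k ((t ∩ S.biUnion B) ∩ B k) = true)
          ↔ (∀ k ∈ S, P k (t ∩ B k) = true) :=
        forall₂_congr fun k hk => by rw [harg k hk]
      simp only [Finset.forall_mem_insert, h2, Bool.decide_and, Bool.decide_coe]

lemma meas_eventOn_inter {μ : Measure (ℕ → Bool)} {m : ℕ → Measure Bool}
    (hμ : IsProductMeasure μ m) {s u : Finset ℕ} (hd : Disjoint s u) (P Q : Finset ℕ → Bool) :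
    μ (eventOn s P ∩ eventOn u Q) = μ (eventOn s P) * μ (eventOn u Q) := by
  rw [eventOn_inter, meas_eventOn hμ, meas_eventOn hμ, meas_eventOn hμ, sum_prod_mul hd P Q]

lemma meas_biInter_eventOn {μ : Measure (ℕ → Bool)} {m : ℕ → Measure Bool}
    (hμ : IsProductMeasure μ m) (S : Finset ℕ) (B : ℕ → Finset ℕ)
    (hd : ∀ k ∈ S, ∀ l ∈ S, k ≠ l → Disjoint (B k) (B l)) (P : ℕ → Finset ℕ → Bool) :
    μ (⋂ k ∈ S, eventOn (B k) (P k)) = ∏ k ∈ S, μ (eventOn (B k) (P k)) := by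
  classical
  have : IsProbabilityMeasure μ := isProbabilityMeasure hμ
  induction S using Finset.induction with
  | empty => simp
  | @insert a S ha ih =>
    rw [Finset.set_biInter_insert, biInter_eventOn]
    have hdis : Disjoint (B a) (S.biUnion B) := by
      rw [Finset.disjoint_biUnion_right]
      intro k hk
      exact hd a (Finset.mem_insert_self a S) k (Finset.mem_insert_of_mem hk)
        fun h => ha (h ▸ hk)
    rw [meas_eventOn_inter hμ hdis, ← biInter_eventOn, Finset.prod_insert ha,
      ih fun k hk l hl => hd k (Finset.mem_insert_of_mem hk) l (Finset.mem_insert_of_mem hl)]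

end SparseAux
namespace SparseAux

lemma sparseSeq_strictMono : StrictMono sparseSeq := by
  apply strictMono_nat_of_lt_succ
  intro k
  have : 0 < 2 ^ (k * ∑ i ∈ Finset.range (k + 1), i) := Nat.pow_pos (by norm_num)
  show sparseSeq k < sparseSeq k + _
  omega

lemma not_sparse {j n : ℕ} (hn : n ∈ Finset.Ioo (sparseSeq j) (sparseSeq (j + 1))) :
    ∀ k, n ≠ sparseSeq k := by
  intro k hk
  rw [Finset.mem_Ioo] at hn
  rw [hk] at hn
  have h1 : j < k := sparseSeq_strictMono.lt_iff_lt.1 hn.1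
  have h2 : k < j + 1 := sparseSeq_strictMono.lt_iff_lt.1 hn.2
  omega

lemma m_half {m : ℕ → Measure Bool} (hprob : ∀ n, IsProbabilityMeasure (m n))
    (hm : IsSparseMarginals m) {j n : ℕ}
    (hn : n ∈ Finset.Ioo (sparseSeq j) (sparseSeq (j + 1))) (b : Bool) :
    m n {b} = 2⁻¹ := by
  have ht : m n {true} = 1 / 2 := hm.2 n (not_sparse hn)
  cases b
  · have hc : ({false} : Set Bool) = {true}ᶜ := by
      ext b; cases b <;> simp
    have := hprob n
    rw [hc, prob_compl_eq_one_sub (measurableSet_singleton _), ht]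
    rw [one_div]
    exact ENNReal.one_sub_inv_two
  · rw [ht, one_div]

lemma sparseEvent_eq (j : ℕ) :
    sparseEvent j = eventOn (Finset.Ioo (sparseSeq j) (sparseSeq (j + 1)))
      fun t => decide (t.card ≤ sparseP j) := by
  ext x
  simp [sparseEvent, eventOn, onesBetween]

lemma blocks_disjoint {j l : ℕ} (h : j ≠ l) :
    Disjoint (Finset.Ioo (sparseSeq j) (sparseSeq (j + 1)))
      (Finset.Ioo (sparseSeq l) (sparseSeq (l + 1))) := by
  rw [Finset.disjoint_left]
  intro n hj hl
  rw [Finset.mem_Ioo] at hj hl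
  rcases Nat.lt_or_ge j l with hlt | hge
  · have : j + 1 ≤ l := hlt
    have := sparseSeq_strictMono.le_iff_le.2 this
    omega
  · have hlt : l < j := by omega
    have : l + 1 ≤ j := hlt
    have := sparseSeq_strictMono.le_iff_le.2 this
    omega

lemma meas_sparseEvent {μ : Measure (ℕ → Bool)} {m : ℕ → Measure Bool}
    (hμ : IsProductMeasure μ m) (hprob : ∀ n, IsProbabilityMeasure (m n))
    (hm : IsSparseMarginals m) (j : ℕ) :
    μ (sparseEvent j) =
      (((Finset.Ioo (sparseSeq j) (sparseSeq (j + 1))).powerset.filter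
          fun t => t.card ≤ sparseP j).card : ℝ≥0∞) *
        2⁻¹ ^ (Finset.Ioo (sparseSeq j) (sparseSeq (j + 1))).card := by
  classical
  rw [sparseEvent_eq, meas_eventOn hμ]
  have hconst : ∀ t ∈ (Finset.Ioo (sparseSeq j) (sparseSeq (j + 1))).powerset.filter
      (fun t => decide (t.card ≤ sparseP j) = true),
      ∏ n ∈ Finset.Ioo (sparseSeq j) (sparseSeq (j + 1)), m n {decide (n ∈ t)}
        = 2⁻¹ ^ (Finset.Ioo (sparseSeq j) (sparseSeq (j + 1))).card := by
    intro t _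
    rw [← Finset.prod_const]
    exact Finset.prod_congr rfl fun n hn => m_half hprob hm hn _
  rw [Finset.sum_congr rfl hconst, Finset.sum_const, nsmul_eq_mul]
  congr 2
  simp

end SparseAux
namespace SparseAux

lemma card_filter_card_le (B : Finset ℕ) (p : ℕ) :
    ((B.powerset.filter fun t => t.card ≤ p)).card ≤ (p + 1) * (B.card + 1) ^ p := by
  classical
  have h1 : B.powerset.filter (fun t => t.card ≤ p)
      = (Finset.range (p + 1)).biUnion (fun i => B.powersetCard i) := by
    ext t
    simp only [Finset.mem_filter, Finset.mem_powerset, Finset.mem_biUnion, Finset.mem_range,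
      Finset.mem_powersetCard, Nat.lt_succ_iff]
    constructor
    · rintro ⟨h1, h2⟩; exact ⟨t.card, h2, h1, rfl⟩
    · rintro ⟨i, hi, h1, rfl⟩; exact ⟨h1, hi⟩
  rw [h1]
  calc ((Finset.range (p + 1)).biUnion fun i => B.powersetCard i).card
      ≤ ∑ i ∈ Finset.range (p + 1), (B.powersetCard i).card := Finset.card_biUnion_le
    _ ≤ ∑ _i ∈ Finset.range (p + 1), (B.card + 1) ^ p := by
        refine Finset.sum_le_sum fun i hi => ?_
        rw [Finset.card_powersetCard]
        calc B.card.choose i ≤ B.card ^ i := Nat.choose_le_pow _ _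
          _ ≤ (B.card + 1) ^ i := Nat.pow_le_pow_left (Nat.le_succ _) _
          _ ≤ (B.card + 1) ^ p := Nat.pow_le_pow_right (Nat.succ_le_succ (Nat.zero_le _))
              (Finset.mem_range_succ_iff.1 hi)
    _ = (p + 1) * (B.card + 1) ^ p := by
        rw [Finset.sum_const, Finset.card_range, smul_eq_mul]

lemma sq_bound (k : ℕ) : (k + 3) * (k + 2) + 2 ≤ 2 ^ (k + 3) := by
  induction k with
  | zero => norm_num
  | succ n ih =>
    have h : 2 ^ (n + 1 + 3) = 2 * 2 ^ (n + 3) := by ring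
    rw [h]
    nlinarith

lemma arith {s j : ℕ} (hj : 2 ≤ j) (hs : j + 1 ≤ s) :
    s * j * 2 ^ s + s + j + 1 ≤ 2 ^ (s * j) := by
  obtain ⟨k, rfl⟩ : ∃ k, s = k + 3 := ⟨s - 3, by omega⟩
  have hsq : (k + 3) * (k + 2) + 2 ≤ 2 ^ (k + 3) := sq_bound k
  have hkey : (k + 3) * j + 2 ≤ 2 ^ (k + 3) := by
    have hj2 : j ≤ k + 2 := by omega
    have : (k + 3) * j ≤ (k + 3) * (k + 2) := Nat.mul_le_mul_left _ hj2
    omega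
  have h2 : (k + 3) + j + 1 ≤ 2 * 2 ^ (k + 3) := by
    have hlt : k + 3 < 2 ^ (k + 3) := Nat.lt_two_pow_self
    omega
  calc (k + 3) * j * 2 ^ (k + 3) + (k + 3) + j + 1
      ≤ (k + 3) * j * 2 ^ (k + 3) + 2 * 2 ^ (k + 3) := by omega
    _ = ((k + 3) * j + 2) * 2 ^ (k + 3) := by ring
    _ ≤ 2 ^ (k + 3) * 2 ^ (k + 3) := Nat.mul_le_mul_right _ hkey
    _ = 2 ^ ((k + 3) * 2) := by rw [← pow_add]; ring_nf
    _ ≤ 2 ^ ((k + 3) * j) := Nat.pow_le_pow_right (by norm_num) (Nat.mul_le_mul_left _ hj)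

lemma gauss_ge {j : ℕ} (hj : 2 ≤ j) : j + 1 ≤ ∑ i ∈ Finset.range (j + 1), i := by
  have h := Finset.sum_range_id_mul_two (j + 1)
  rw [Nat.add_sub_cancel] at h
  have h2 : (j + 1) * 2 ≤ (j + 1) * j := Nat.mul_le_mul_left _ hj
  omega

lemma card_Ioo_sparse (j : ℕ) :
    (Finset.Ioo (sparseSeq j) (sparseSeq (j + 1))).card
      = 2 ^ (j * ∑ i ∈ Finset.range (j + 1), i) - 1 := by
  rw [Nat.card_Ioo]
  show sparseSeq j + 2 ^ (j * ∑ i ∈ Finset.range (j + 1), i) - sparseSeq j - 1 = _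
  omega

lemma count_mul_le (j : ℕ) (hj : 2 ≤ j) :
    ((Finset.Ioo (sparseSeq j) (sparseSeq (j + 1))).powerset.filter
        fun t => t.card ≤ sparseP j).card * 2 ^ (j - 1)
      ≤ 2 ^ (Finset.Ioo (sparseSeq j) (sparseSeq (j + 1))).card := by
  set s := ∑ i ∈ Finset.range (j + 1), i with hs
  have hsj : j + 1 ≤ s := gauss_ge hj
  have hN : (Finset.Ioo (sparseSeq j) (sparseSeq (j + 1))).card = 2 ^ (j * s) - 1 :=
    card_Ioo_sparse j
  have hN1 : (Finset.Ioo (sparseSeq j) (sparseSeq (j + 1))).card + 1 = 2 ^ (j * s) := by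
    have : 1 ≤ 2 ^ (j * s) := Nat.one_le_two_pow
    omega
  have hC : ((Finset.Ioo (sparseSeq j) (sparseSeq (j + 1))).powerset.filter
      fun t => t.card ≤ sparseP j).card ≤ (sparseP j + 1) * (2 ^ (j * s)) ^ sparseP j := by
    have := card_filter_card_le (Finset.Ioo (sparseSeq j) (sparseSeq (j + 1))) (sparseP j)
    rwa [hN1] at this
  have hp : sparseP j = 2 ^ s := rfl
  calc ((Finset.Ioo (sparseSeq j) (sparseSeq (j + 1))).powerset.filter
        fun t => t.card ≤ sparseP j).card * 2 ^ (j - 1)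
      ≤ ((sparseP j + 1) * (2 ^ (j * s)) ^ sparseP j) * 2 ^ (j - 1) :=
        Nat.mul_le_mul_right _ hC
    _ ≤ (2 ^ (s + 1) * (2 ^ (j * s)) ^ 2 ^ s) * 2 ^ (j - 1) := by
        refine Nat.mul_le_mul_right _ (Nat.mul_le_mul ?_ ?_)
        · rw [hp, pow_succ]
          have : 1 ≤ 2 ^ s := Nat.one_le_two_pow
          omega
        · rw [hp]
    _ = 2 ^ (s + 1 + j * s * 2 ^ s + (j - 1)) := by
        rw [← pow_mul, ← pow_add, ← pow_add]
    _ ≤ 2 ^ (2 ^ (j * s) - 1) := by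
        refine Nat.pow_le_pow_right (by norm_num) ?_
        have harith : s * j * 2 ^ s + s + j + 1 ≤ 2 ^ (s * j) := arith hj hsj
        have h1 : 1 ≤ j := by omega
        have hcomm : s * j = j * s := Nat.mul_comm s j
        rw [hcomm] at harith
        omega
    _ = 2 ^ (Finset.Ioo (sparseSeq j) (sparseSeq (j + 1))).card := by rw [hN]

end SparseAux
namespace SparseAux

lemma ennreal_bound {C N k : ℕ} (h : C ≤ 2 ^ (N - k)) (hk : k ≤ N) :
    (C : ℝ≥0∞) * 2⁻¹ ^ N ≤ 2⁻¹ ^ k := by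
  obtain ⟨a, rfl⟩ : ∃ a, N = a + k := ⟨N - k, by omega⟩
  rw [Nat.add_sub_cancel] at h
  have hcast : (C : ℝ≥0∞) ≤ (2 : ℝ≥0∞) ^ a := by exact_mod_cast Nat.cast_le.2 h
  calc (C : ℝ≥0∞) * 2⁻¹ ^ (a + k) ≤ (2 : ℝ≥0∞) ^ a * 2⁻¹ ^ (a + k) :=
        mul_le_mul_left hcast _
    _ = ((2 : ℝ≥0∞) * 2⁻¹) ^ a * 2⁻¹ ^ k := by rw [pow_add, ← mul_assoc, mul_pow]
    _ = 2⁻¹ ^ k := by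
        rw [ENNReal.mul_inv_cancel (by norm_num) (by norm_num), one_pow, one_mul]

lemma meas_sparseEvent_le {μ : Measure (ℕ → Bool)} {m : ℕ → Measure Bool}
    (hμ : IsProductMeasure μ m) (hprob : ∀ n, IsProbabilityMeasure (m n))
    (hm : IsSparseMarginals m) (k : ℕ) :
    μ (sparseEvent (k + 1)) ≤ 2⁻¹ ^ k := by
  have hP : IsProbabilityMeasure μ := isProbabilityMeasure hμ
  cases k with
  | zero => simpa using prob_le_one
  | succ n =>
    show μ (sparseEvent (n + 2)) ≤ 2⁻¹ ^ (n + 1)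
    have hj : 2 ≤ n + 2 := by omega
    have hnat := count_mul_le (n + 2) hj
    have hj1 : n + 2 - 1 = n + 1 := by omega
    rw [hj1] at hnat
    set B := Finset.Ioo (sparseSeq (n + 2)) (sparseSeq (n + 2 + 1)) with hB
    set C := (B.powerset.filter fun t => t.card ≤ sparseP (n + 2)).card with hC
    set N := B.card with hN
    have hCpos : 1 ≤ C := by
      rw [hC]
      refine Finset.card_pos.2 ⟨∅, ?_⟩
      simp
    have hkN : n + 1 ≤ N := by
      have h1 : 2 ^ (n + 1) ≤ 2 ^ N := by
        calc 2 ^ (n + 1) = 1 * 2 ^ (n + 1) := (one_mul _).symm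
          _ ≤ C * 2 ^ (n + 1) := Nat.mul_le_mul_right _ hCpos
          _ ≤ 2 ^ N := hnat
      exact (Nat.pow_le_pow_iff_right (by norm_num)).1 h1
    have hC2 : C ≤ 2 ^ (N - (n + 1)) := by
      have heq : 2 ^ (N - (n + 1)) * 2 ^ (n + 1) = 2 ^ N := by
        rw [← pow_add]
        congr 1
        omega
      refine Nat.le_of_mul_le_mul_right ?_ (Nat.pow_pos (by norm_num) : 0 < 2 ^ (n + 1))
      rw [heq]
      exact hnat
    have hmeas := meas_sparseEvent hμ hprob hm (n + 2)
    rw [hmeas]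
    exact ennreal_bound hC2 hkN

end SparseAux
/-- for the sparse product measure, the events `(Z_k)_{k ≥ 1}` are mutually
independent and almost every `x` lies in only finitely many of them:
`μ (limsup_k Z_k) = 0`. -/
theorem sparse_events_indep_and_limsup_null
    (m : ℕ → Measure Bool) (hprob : ∀ n, IsProbabilityMeasure (m n))
    (hm : IsSparseMarginals m)
    (μ : Measure (ℕ → Bool)) (hμ : IsProductMeasure μ m) :
    ProbabilityTheory.iIndepSet (fun k : ℕ => sparseEvent (k + 1)) μ ∧
      μ (Filter.limsup (fun k : ℕ => sparseEvent (k + 1)) atTop) = 0 := by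
  constructor
  · have hmeasble : ∀ k : ℕ, MeasurableSet (sparseEvent (k + 1)) := by
      intro k
      rw [SparseAux.sparseEvent_eq]
      exact SparseAux.measurableSet_eventOn _ _
    rw [ProbabilityTheory.iIndepSet_iff_meas_biInter hmeasble]
    intro S
    have hd : ∀ k ∈ S, ∀ l ∈ S, k ≠ l →
        Disjoint (Finset.Ioo (sparseSeq (k + 1)) (sparseSeq (k + 1 + 1)))
          (Finset.Ioo (sparseSeq (l + 1)) (sparseSeq (l + 1 + 1))) := by
      intro k _ l _ hne
      exact SparseAux.blocks_disjoint (by omega)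
    have h := SparseAux.meas_biInter_eventOn hμ S
      (fun k => Finset.Ioo (sparseSeq (k + 1)) (sparseSeq (k + 1 + 1))) hd
      (fun k t => decide (t.card ≤ sparseP (k + 1)))
    simp_rw [SparseAux.sparseEvent_eq]
    exact h
  · apply measure_limsup_atTop_eq_zero
    have hle : ∀ k : ℕ, μ (sparseEvent (k + 1)) ≤ (2⁻¹ : ℝ≥0∞) ^ k :=
      fun k => SparseAux.meas_sparseEvent_le hμ hprob hm k
    have hsum : ∑' k : ℕ, μ (sparseEvent (k + 1)) ≤ ∑' k : ℕ, (2⁻¹ : ℝ≥0∞) ^ k :=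
      ENNReal.tsum_le_tsum hle
    have hg : ∑' k : ℕ, (2⁻¹ : ℝ≥0∞) ^ k = (1 - 2⁻¹)⁻¹ := ENNReal.tsum_geometric _
    refine ne_top_of_le_ne_top ?_ hsum
    rw [hg, ENNReal.one_sub_inv_two, inv_inv]
    exact ENNReal.ofNat_ne_top
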